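/- For real q > 1 and fixed n ≥ k+1 ≥ 3, the infidelity 1 - F_{1→k}(n) with F_{1→k}(n) = 1 - (q^2/(q^2+1))^{n-k}(1 - (1/(q(q^2-q+1)))(1 + ((q-1)^2/q)(q/(q^2+1))^{k-2})) is strictly increasing in k; equivalently, to keep fidelity at least a fixed value one must increase n as k increases. -/

import Mathlib

theorem stmt_17 (q : ℝ) (hq : 1 < q) (n : ℕ) :
    let F : ℕ → ℝ := fun k =>
      1 - (q^2 / (q^2 + 1))^(n - k) *
        (1 - (1 / (q * (q^2 - q + 1))) *
          (1 + ((q - 1)^2 / q) * (q / (q^2 + 1))^(k - 2)))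
    ∀ k₁ k₂ : ℕ, 2 ≤ k₁ → k₁ < k₂ → k₂ + 1 ≤ n → 1 - F k₁ < 1 - F k₂ := by
  intro F k₁ k₂ hk1 hlt hn
  have hq0 : (0:ℝ) < q := lt_trans one_pos hq
  have hq2 : (0:ℝ) < q^2 + 1 := by positivity
  have hqq : (0:ℝ) < q^2 - q + 1 := by nlinarith
  simp only [F, sub_sub_cancel]
  set r : ℝ := q^2/(q^2+1) with hr
  set s : ℝ := q/(q^2+1) with hs
  set A : ℝ := 1/(q*(q^2-q+1)) with hA
  set B : ℝ := (q-1)^2/q with hB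
  have hr0 : 0 < r := by positivity
  have hr1 : r < 1 := by rw [hr, div_lt_one hq2]; nlinarith
  have hs0 : 0 < s := by positivity
  have hs1 : s < 1 := by rw [hs, div_lt_one hq2]; nlinarith
  have hA0 : 0 < A := by positivity
  have hB0 : 0 < B := div_pos (pow_pos (sub_pos.mpr hq) 2) hq0
  -- powers
  have hnn : n - k₂ < n - k₁ := by omega
  have hkk : k₁ - 2 < k₂ - 2 := by omega
  have hpow : r ^ (n - k₁) < r ^ (n - k₂) :=
    pow_lt_pow_right_of_lt_one₀ hr0 hr1 hnn
  have hspow : s ^ (k₂ - 2) < s ^ (k₁ - 2) :=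
    pow_lt_pow_right_of_lt_one₀ hs0 hs1 hkk
  have hfac : 1 - A * (1 + B * s ^ (k₁ - 2)) <
      1 - A * (1 + B * s ^ (k₂ - 2)) := by
    have := mul_lt_mul_of_pos_left (mul_lt_mul_of_pos_left hspow hB0) hA0
    nlinarith
  have ht1 : s ^ (k₁ - 2) ≤ 1 := pow_le_one₀ hs0.le hs1.le
  have hAB : A * (1 + B) = 1 / q^2 := by
    have hqq' := hqq.ne'
    rw [hA, hB, div_mul_eq_mul_div, one_mul, div_eq_div_iff (by positivity) (by positivity)]; field_simp; ring
  have hpos : 0 ≤ 1 - A * (1 + B * s ^ (k₁ - 2)) := by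
    have h1 : A * (1 + B * s ^ (k₁ - 2)) ≤ A * (1 + B) := by
      apply mul_le_mul_of_nonneg_left _ hA0.le
      nlinarith
    have h2 : (1:ℝ) / q^2 ≤ 1 := by
      rw [div_le_one (by positivity)]; nlinarith
    linarith [hAB ▸ h1]
  exact mul_lt_mul'' hpow hfac (pow_nonneg hr0.le _) hpos
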